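/- For every linear map φ : p_J → C_J the following hold: (i) dim(U_φ ∩ V_{n−d}) ≥ 1 if and only if det(X_φ) = 0; (ii) dim(U_φ ∩ V_{n−d}) ≥ m if and only if X_φ = 0; (iii) if r > m, then dim(U_φ ∩ V_{n−d}) ≥ r holds for no φ. -/

import Mathlib

/-- The `i`-th standard basis vector of `ℂ^n`. -/
noncomputable def ee (n : ℕ) (i : Fin n) : Fin n → ℂ := Pi.single i 1

/-- `V_{n-d}`: the span of the last `n - d` standard basis vectors. -/
noncomputable def Vhigh (n d : ℕ) : Submodule ℂ (Fin n → ℂ) :=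
  Submodule.span ℂ {v | ∃ i : Fin n, d ≤ i.val ∧ v = ee n i}

/-- The columns of `X_φ`: the set `J_{>d}` (0-indexed: elements of `J` with value `≥ d`). -/
def colsF (n d : ℕ) (J : Finset (Fin n)) : Finset (Fin n) :=
  J.filter fun j : Fin n => d ≤ j.val

/-- The rows of `X_φ`: the set `{1,…,d} ∖ J` (0-indexed: indices `< d` not in `J`). -/
def rowsF (n d : ℕ) (J : Finset (Fin n)) : Finset (Fin n) :=
  (Finset.univ.filter fun i : Fin n => i.val < d) \ J

/-- The subspace `U_φ = span{e_j + φ(e_j) : j ∈ J}`, where the linear map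
`φ : p_J → C_J` is encoded by its matrix of coefficients `a`. -/
noncomputable def Uphi (n : ℕ) (J : Finset (Fin n))
    (a : {i : Fin n // i ∉ J} → {j : Fin n // j ∈ J} → ℂ) : Submodule ℂ (Fin n → ℂ) :=
  Submodule.span ℂ {v | ∃ j : {j : Fin n // j ∈ J},
    v = ee n j.1 + ∑ i : {i : Fin n // i ∉ J}, a i j • ee n i.1}

/-- The `m × m` matrix `X_φ`, with rows indexed by `{1,…,d} ∖ J` and columns by
`J_{>d}`, both listed in increasing order. -/
noncomputable def Xphi (n d : ℕ) (J : Finset (Fin n)) (m : ℕ)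
    (hrows : (rowsF n d J).card = m) (hcols : (colsF n d J).card = m)
    (a : {i : Fin n // i ∉ J} → {j : Fin n // j ∈ J} → ℂ) :
    Matrix (Fin m) (Fin m) ℂ :=
  Matrix.of fun p q =>
    a ⟨((rowsF n d J).orderIsoOfFin hrows p : Fin n), by
        have h := ((rowsF n d J).orderIsoOfFin hrows p).2
        simp only [rowsF, Finset.mem_sdiff] at h
        exact h.2⟩
      ⟨((colsF n d J).orderIsoOfFin hcols q : Fin n), by
        have h := ((colsF n d J).orderIsoOfFin hcols q).2
        simp only [colsF, Finset.mem_filter] at h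
        exact h.1⟩

section aux
variable {n d m : ℕ} {J : Finset (Fin n)}

/-- The vector `e_j + φ(e_j)`. -/
noncomputable def uvec (a : {i : Fin n // i ∉ J} → {j : Fin n // j ∈ J} → ℂ)
    (j : {j : Fin n // j ∈ J}) : Fin n → ℂ :=
  ee n j.1 + ∑ i : {i : Fin n // i ∉ J}, a i j • ee n i.1

lemma uvec_apply (a : {i : Fin n // i ∉ J} → {j : Fin n // j ∈ J} → ℂ)
    (j : {j : Fin n // j ∈ J}) (x : Fin n) :
    uvec a j x = (if x = j.1 then 1 else 0) +
      (if h : x ∈ J then 0 else a ⟨x, h⟩ j) := by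
  classical
  simp only [uvec, Pi.add_apply, Finset.sum_apply, Pi.smul_apply, ee, Pi.single_apply,
    smul_eq_mul]
  congr 1
  by_cases h : x ∈ J
  · rw [dif_pos h]
    apply Finset.sum_eq_zero
    intro i _
    rw [if_neg, mul_zero]
    exact fun e => i.2 (e ▸ h)
  · rw [dif_neg h, Fintype.sum_eq_single ⟨x, h⟩]
    · simp
    · intro i hi
      rw [if_neg, mul_zero]
      exact fun e => hi (Subtype.ext e.symm)

lemma Uphi_eq (a : {i : Fin n // i ∉ J} → {j : Fin n // j ∈ J} → ℂ) :
    Uphi n J a = Submodule.span ℂ (Set.range (uvec a)) := by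
  unfold Uphi uvec
  congr 1
  ext v
  constructor
  · rintro ⟨j, rfl⟩; exact ⟨j, rfl⟩
  · rintro ⟨j, rfl⟩; exact ⟨j, rfl⟩

/-- Vectors vanishing on the first `d` coordinates. -/
noncomputable def Wlow (n d : ℕ) : Submodule ℂ (Fin n → ℂ) where
  carrier := {v | ∀ i : Fin n, i.val < d → v i = 0}
  add_mem' := by intro x y hx hy i hi; simp [hx i hi, hy i hi]
  zero_mem' := by intro i hi; rfl
  smul_mem' := by intro c x hx i hi; simp [hx i hi]

lemma mem_Wlow {v : Fin n → ℂ} : v ∈ Wlow n d ↔ ∀ i : Fin n, i.val < d → v i = 0 :=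
  Iff.rfl

lemma Vhigh_eq : Vhigh n d = Wlow n d := by
  classical
  apply le_antisymm
  · rw [Vhigh, Submodule.span_le]
    rintro v ⟨i, hi, rfl⟩ x hx
    have : x ≠ i := by intro e; subst e; omega
    simp [ee, Pi.single_apply, this]
  · intro v hv
    have hvsum : v = ∑ i : Fin n, v i • ee n i := by
      funext x
      simp [ee, Finset.sum_apply, Pi.single_apply]
    rw [hvsum]
    apply Submodule.sum_mem
    intro i _
    by_cases h : d ≤ i.val
    · exact Submodule.smul_mem _ _ (Submodule.subset_span ⟨i, h, rfl⟩)
    · have : v i = 0 := hv i (by omega)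
      simp [this]

lemma col_mem_J (hcols : (colsF n d J).card = m) (q : Fin m) :
    (((colsF n d J).orderIsoOfFin hcols q) : Fin n) ∈ J := by
  have h := ((colsF n d J).orderIsoOfFin hcols q).2
  simp only [colsF, Finset.mem_filter] at h
  exact h.1

lemma col_ge_d (hcols : (colsF n d J).card = m) (q : Fin m) :
    d ≤ (((colsF n d J).orderIsoOfFin hcols q) : Fin n).val := by
  have h := ((colsF n d J).orderIsoOfFin hcols q).2
  simp only [colsF, Finset.mem_filter] at h
  exact h.2

/-- The `q`-th column index, as an element of the subtype `J`. -/
noncomputable def colJ (hcols : (colsF n d J).card = m) (q : Fin m) :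
    {j : Fin n // j ∈ J} :=
  ⟨(((colsF n d J).orderIsoOfFin hcols q) : Fin n), col_mem_J hcols q⟩

lemma colJ_inj (hcols : (colsF n d J).card = m) {q q' : Fin m}
    (h : (colJ hcols q).1 = (colJ hcols q').1) : q = q' := by
  exact ((colsF n d J).orderIsoOfFin hcols).injective (Subtype.ext h)

lemma row_not_mem (hrows : (rowsF n d J).card = m) (p : Fin m) :
    (((rowsF n d J).orderIsoOfFin hrows p) : Fin n) ∉ J := by
  have h := ((rowsF n d J).orderIsoOfFin hrows p).2
  simp only [rowsF, Finset.mem_sdiff] at h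
  exact h.2

lemma row_lt_d (hrows : (rowsF n d J).card = m) (p : Fin m) :
    (((rowsF n d J).orderIsoOfFin hrows p) : Fin n).val < d := by
  have h := ((rowsF n d J).orderIsoOfFin hrows p).2
  simp only [rowsF, Finset.mem_sdiff, Finset.mem_filter] at h
  exact h.1.2

/-- The `p`-th row index, as an element of the subtype `Jᶜ`. -/
noncomputable def rowI (hrows : (rowsF n d J).card = m) (p : Fin m) :
    {i : Fin n // i ∉ J} :=
  ⟨(((rowsF n d J).orderIsoOfFin hrows p) : Fin n), row_not_mem hrows p⟩

lemma Xphi_apply (hrows : (rowsF n d J).card = m) (hcols : (colsF n d J).card = m)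
    (a : {i : Fin n // i ∉ J} → {j : Fin n // j ∈ J} → ℂ) (p q : Fin m) :
    Xphi n d J m hrows hcols a p q = a (rowI hrows p) (colJ hcols q) := rfl

/-- Reindexing sums over `J` that vanish below `d` as sums over the columns. -/
lemma sum_cols {M : Type*} [AddCommMonoid M] (hcols : (colsF n d J).card = m)
    (F : {j : Fin n // j ∈ J} → M) (hF : ∀ j, j.1.val < d → F j = 0) :
    ∑ j : {j : Fin n // j ∈ J}, F j = ∑ q : Fin m, F (colJ hcols q) := by
  classical
  set G : Fin n → M := fun x => if h : x ∈ J then F ⟨x, h⟩ else 0 with hG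
  have h1 : ∑ j : {j : Fin n // j ∈ J}, F j = ∑ x ∈ J, G x := by
    rw [← Finset.sum_coe_sort J G]
    exact Finset.sum_congr rfl fun j _ => by simp only [hG, dif_pos j.2]
  have h2 : ∑ x ∈ colsF n d J, G x = ∑ x ∈ J, G x := by
    apply Finset.sum_subset (Finset.filter_subset _ _)
    intro x hxJ hxn
    simp only [colsF, Finset.mem_filter, not_and] at hxn
    have hlt : x.val < d := by
      by_contra h
      exact (hxn hxJ) (by omega)
    rw [hG]
    simp only [dif_pos hxJ]
    exact hF ⟨x, hxJ⟩ hlt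
  have h3 : ∑ x ∈ colsF n d J, G x
      = ∑ q : Fin m, G (((colsF n d J).orderIsoOfFin hcols q : Fin n)) := by
    rw [← Finset.sum_coe_sort (colsF n d J) G]
    exact (Equiv.sum_comp ((colsF n d J).orderIsoOfFin hcols).toEquiv
      (fun z => G z.1)).symm
  have h4 : ∀ q : Fin m, G (((colsF n d J).orderIsoOfFin hcols q : Fin n))
      = F (colJ hcols q) := fun q => dif_pos (col_mem_J hcols q)
  rw [h1, ← h2, h3]
  exact Finset.sum_congr rfl fun q _ => h4 q

end aux

theorem stmt10 (n d : ℕ) (hd1 : 1 ≤ d) (hdn : d ≤ n - d)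
    (J : Finset (Fin n)) (hJ : J.card = d) (m : ℕ)
    (hcols : (colsF n d J).card = m) (hrows : (rowsF n d J).card = m)
    (a : {i : Fin n // i ∉ J} → {j : Fin n // j ∈ J} → ℂ) :
    (1 ≤ Module.finrank ℂ ↥(Uphi n J a ⊓ Vhigh n d) ↔
      (Xphi n d J m hrows hcols a).det = 0) ∧
    (m ≤ Module.finrank ℂ ↥(Uphi n J a ⊓ Vhigh n d) ↔
      Xphi n d J m hrows hcols a = 0) ∧
    (∀ r : ℕ, m < r → ¬ r ≤ Module.finrank ℂ ↥(Uphi n J a ⊓ Vhigh n d)) := by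
  classical
  set X : Matrix (Fin m) (Fin m) ℂ := Xphi n d J m hrows hcols a with hXdef
  -- the linear map sending coefficients `c` to `∑ q, c q • u_{col q}`
  set g : (Fin m → ℂ) →ₗ[ℂ] (Fin n → ℂ) :=
    ∑ q : Fin m, (LinearMap.proj q).smulRight (uvec a (colJ hcols q)) with hgdef
  have hg : ∀ c, g c = ∑ q : Fin m, c q • uvec a (colJ hcols q) := by
    intro c
    simp [hgdef, LinearMap.sum_apply, LinearMap.smulRight_apply, LinearMap.proj_apply]
  have hgx : ∀ c x, g c x = ∑ q : Fin m, c q * uvec a (colJ hcols q) x := by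
    intro c x
    rw [hg]
    simp [Finset.sum_apply]
  -- evaluation at column coordinates recovers the coefficients
  have heval : ∀ c q0, g c (colJ hcols q0).1 = c q0 := by
    intro c q0
    rw [hgx, Fintype.sum_eq_single q0]
    · rw [uvec_apply, dif_pos (colJ hcols q0).2, if_pos rfl]
      ring
    · intro q hq
      rw [uvec_apply, dif_pos (colJ hcols q0).2, if_neg, add_zero, mul_zero]
      exact fun e => hq (colJ_inj hcols e).symm
  -- coordinates of a general combination `∑ j, c'' j • u j`
  have hvJ : ∀ (c'' : {j : Fin n // j ∈ J} → ℂ) (x : Fin n) (hx : x ∈ J),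
      (∑ j : {j : Fin n // j ∈ J}, c'' j • uvec a j) x = c'' ⟨x, hx⟩ := by
    intro c'' x hx
    rw [Finset.sum_apply, Fintype.sum_eq_single ⟨x, hx⟩]
    · rw [Pi.smul_apply, smul_eq_mul, uvec_apply, dif_pos hx, if_pos rfl]
      ring
    · intro j hj
      rw [Pi.smul_apply, smul_eq_mul, uvec_apply, dif_pos hx, if_neg, add_zero, mul_zero]
      exact fun e => hj (Subtype.ext e.symm)
  have hvI : ∀ (c'' : {j : Fin n // j ∈ J} → ℂ) (x : Fin n) (hx : x ∉ J),
      (∑ j : {j : Fin n // j ∈ J}, c'' j • uvec a j) x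
        = ∑ j : {j : Fin n // j ∈ J}, c'' j * a ⟨x, hx⟩ j := by
    intro c'' x hx
    rw [Finset.sum_apply]
    refine Finset.sum_congr rfl fun j _ => ?_
    rw [Pi.smul_apply, smul_eq_mul, uvec_apply, dif_neg hx, if_neg, zero_add]
    exact fun e => hx (e ▸ j.2)
  -- `g c` always lies in `U_φ`
  have hmemU : ∀ c : Fin m → ℂ, g c ∈ Uphi n J a := by
    intro c
    rw [Uphi_eq, hg]
    exact Submodule.sum_mem _ fun q _ =>
      Submodule.smul_mem _ _ (Submodule.subset_span ⟨colJ hcols q, rfl⟩)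
  -- if `X c = 0` then `g c` lies in `V`
  have hmemV : ∀ c : Fin m → ℂ, X.mulVec c = 0 → g c ∈ Vhigh n d := by
    intro c hc
    rw [Vhigh_eq, mem_Wlow]
    intro x hx
    rw [hgx]
    by_cases hxJ : x ∈ J
    · apply Finset.sum_eq_zero
      intro q _
      rw [uvec_apply, dif_pos hxJ, add_zero, if_neg, mul_zero]
      intro e
      have hd' : d ≤ ((colJ hcols q).1 : Fin n).val := col_ge_d hcols q
      rw [← e] at hd'
      omega
    · have hxr : x ∈ rowsF n d J := by
        simp only [rowsF, Finset.mem_sdiff, Finset.mem_filter, Finset.mem_univ, true_and]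
        exact ⟨hx, hxJ⟩
      set p := ((rowsF n d J).orderIsoOfFin hrows).symm ⟨x, hxr⟩ with hp
      have hpx : (((rowsF n d J).orderIsoOfFin hrows p) : Fin n) = x := by
        rw [hp, OrderIso.apply_symm_apply]
      have hXa : ∀ q, a ⟨x, hxJ⟩ (colJ hcols q) = X p q := by
        intro q
        rw [hXdef, Xphi_apply]
        congr 1
        exact Subtype.ext hpx.symm
      have : ∑ q : Fin m, c q * uvec a (colJ hcols q) x = X.mulVec c p := by
        rw [Matrix.mulVec, dotProduct]
        refine Finset.sum_congr rfl fun q _ => ?_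
        rw [uvec_apply, dif_neg hxJ, if_neg, zero_add, hXa q, mul_comm]
        exact fun e => hxJ (e ▸ (colJ hcols q).2)
      rw [this, hc]
      rfl
  -- injectivity of `g`
  have hginj : ∀ c, g c = 0 → c = 0 := by
    intro c hc
    funext q
    have := heval c q
    rw [hc] at this
    simpa using this.symm
  -- surjectivity onto `U ⊓ V`
  have hsurj : ∀ v ∈ Uphi n J a ⊓ Vhigh n d, ∃ c, X.mulVec c = 0 ∧ g c = v := by
    intro v hv
    obtain ⟨hvU, hvV⟩ := Submodule.mem_inf.mp hv
    rw [Uphi_eq] at hvU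
    have hvU' : v ∈ Submodule.span ℂ (Set.range (uvec a)) := hvU
    rw [Submodule.mem_span_range_iff_exists_fun] at hvU'
    obtain ⟨c'', hc''⟩ := hvU'
    rw [Vhigh_eq, mem_Wlow] at hvV
    have hcz : ∀ j : {j : Fin n // j ∈ J}, j.1.val < d → c'' j = 0 := by
      intro j hj
      have h1 := hvJ c'' j.1 j.2
      rw [hc''] at h1
      rw [← h1]
      exact hvV j.1 hj
    refine ⟨fun q => c'' (colJ hcols q), ?_, ?_⟩
    · funext p
      have hstep : X.mulVec (fun q => c'' (colJ hcols q)) p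
          = ∑ j : {j : Fin n // j ∈ J}, c'' j * a (rowI hrows p) j := by
        rw [Matrix.mulVec, dotProduct]
        rw [sum_cols hcols (fun j => c'' j * a (rowI hrows p) j)
          (fun j hj => by show c'' j * _ = 0; rw [hcz j hj, zero_mul])]
        refine Finset.sum_congr rfl fun q _ => ?_
        rw [hXdef, Xphi_apply, mul_comm]
      have h2 := hvI c'' (rowI hrows p).1 (rowI hrows p).2
      rw [hc''] at h2
      have h3 : v (rowI hrows p).1 = 0 := hvV _ (row_lt_d hrows p)
      have h4 : (⟨(rowI hrows p).1, (rowI hrows p).2⟩ : {i : Fin n // i ∉ J})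
          = rowI hrows p := rfl
      rw [hstep, ← h4, ← h2, h3]
      rfl
    · rw [hg, ← sum_cols hcols (fun j => c'' j • uvec a j)
        (fun j hj => by show c'' j • _ = (0 : Fin n → ℂ); rw [hcz j hj, zero_smul])]
      exact hc''
  -- the linear equivalence between `ker X` and `U ⊓ V`
  set K := LinearMap.ker X.mulVecLin with hK
  have hker : ∀ c : K, X.mulVec c.1 = 0 := fun c => c.2
  let e0 : K →ₗ[ℂ] ↥(Uphi n J a ⊓ Vhigh n d) :=
    LinearMap.codRestrict _ (g ∘ₗ K.subtype)
      (fun c => Submodule.mem_inf.mpr ⟨hmemU _, hmemV _ (hker c)⟩)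
  have he0inj : Function.Injective e0 := by
    intro c1 c2 h
    have : g c1.1 = g c2.1 := congrArg Subtype.val h
    have : g (c1.1 - c2.1) = 0 := by rw [map_sub, this, sub_self]
    have := hginj _ this
    exact Subtype.ext (by linear_combination (norm := module) this)
  have he0surj : Function.Surjective e0 := by
    rintro ⟨v, hv⟩
    obtain ⟨c, hc0, hcg⟩ := hsurj v hv
    exact ⟨⟨c, hc0⟩, Subtype.ext hcg⟩
  have hfr : Module.finrank ℂ ↥(Uphi n J a ⊓ Vhigh n d) = Module.finrank ℂ K :=
    (LinearEquiv.ofBijective e0 ⟨he0inj, he0surj⟩).finrank_eq.symm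
  have hKle : Module.finrank ℂ K ≤ m := by
    have := K.finrank_le
    simpa using this
  refine ⟨?_, ?_, ?_⟩
  · -- (i)
    rw [hfr]
    constructor
    · intro h
      obtain ⟨x, hx⟩ := Module.finrank_pos_iff_exists_ne_zero.mp (lt_of_lt_of_le one_pos h)
      exact Matrix.exists_mulVec_eq_zero_iff.mp
        ⟨x.1, fun e => hx (Subtype.ext e), x.2⟩
    · intro h
      obtain ⟨v, hv0, hveq⟩ := Matrix.exists_mulVec_eq_zero_iff.mpr h
      exact Module.finrank_pos_iff_exists_ne_zero.mpr
        ⟨⟨v, hveq⟩, fun e => hv0 (congrArg Subtype.val e)⟩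
  · -- (ii)
    rw [hfr]
    constructor
    · intro h
      have hKm : Module.finrank ℂ K = m := le_antisymm hKle h
      have hKtop : K = ⊤ := Submodule.eq_top_of_finrank_eq (by simpa using hKm)
      have hz : X.mulVecLin = 0 := LinearMap.ker_eq_top.mp hKtop
      ext p q
      have h1 : X.mulVec (Pi.single q 1) p = X p q * 1 := by
        rw [Matrix.mulVec_single]; simp
      have h2 : X.mulVec (Pi.single q 1) = 0 := by
        have : X.mulVecLin (Pi.single q 1) = 0 := by rw [hz]; rfl
        simpa using this
      rw [h2] at h1
      simpa using h1.symm
    · intro h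
      have hz : X.mulVecLin = 0 := by rw [h]; exact Matrix.mulVecLin_zero
      have hKtop : K = ⊤ := LinearMap.ker_eq_top.mpr hz
      rw [hK] at hKtop ⊢
      rw [hKtop]
      simp
  · -- (iii)
    intro r hr hle
    rw [hfr] at hle
    exact absurd hle (Nat.not_le.mpr (lt_of_le_of_lt hKle hr))
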